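/- Let V_1 be the (l+1)-dimensional irreducible U_q(sl_2)-module with lower crystal lattice L_1 = ⊕_{k=0}^{l} A_0 f^{(k)} v_1, and V_2 the q-boson Fock module with lattice L_2 = ⊕_{k ≥ 0} A_0 f^{(k)} v_2. For s ≤ l − t (with 0 ≤ t ≤ l, s ≥ 0): Δ_B(f^{(s)}) E_t ≡ f^{(s)} v_1 ⊗ f^{(t)} v_2 (mod q L_1 ⊗ L_2), where E_t = ∑_{i=0}^{t} a_{t,i}(q) f^{(i)}v_1 ⊗ f^{(t−i)}v_2. -/

import Mathlib

noncomputable section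

/-- The field `ℚ(q)` of rational functions. -/
abbrev K : Type := RatFunc ℚ

/-- The indeterminate `q`. -/
def q : K := RatFunc.X

/-- The balanced quantum integer `[k] = (q^k - q^{-k})/(q - q⁻¹)`. -/
def qint (k : ℤ) : K := (q ^ k - q ^ (-k)) / (q - q⁻¹)

/-- The quantum factorial `[k]! = [1][2]⋯[k]`. -/
def qfact : ℕ → K
  | 0 => 1
  | k + 1 => qfact k * qint ((k : ℤ) + 1)

/-- The Gaussian binomial coefficient `[c choose d] = [c]!/([c-d]![d]!)` for `c ≥ d ≥ 0`,
and `0` otherwise. -/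
def qbinom (c d : ℤ) : K :=
  if d ≤ c ∧ 0 ≤ d then qfact c.toNat / (qfact (c - d).toNat * qfact d.toNat) else 0

/-- The coefficient `a_{t,i}(q) = ∏_{0 ≤ j ≤ i−1} q^{l−t+1}/(q^{2(l−j)} − 1)`,
with `a_{t,0} = 1`. -/
def att (l t i : ℕ) : K :=
  ∏ j ∈ Finset.range i, q ^ ((l : ℤ) - t + 1) / (q ^ (2 * ((l : ℤ) - j)) - 1)

/-- The vector `E_t = ∑_{i=0}^{t} a_{t,i}(q) f^{(i)}v₁ ⊗ f^{(t−i)}v₂` in `V₁ ⊗ V₂`,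
where the basis vector `f^{(i)}v₁ ⊗ f^{(j)}v₂` is encoded as `single (i, j)`. -/
def Etvec (l t : ℕ) : (ℕ × ℕ) →₀ K :=
  ∑ i ∈ Finset.range (t + 1), Finsupp.single (i, t - i) (att l t i)

/-- The action of `Δ_B(f) = f ⊗ 1 + k ⊗ f` on `V₁ ⊗ V₂`, where on the `(l+1)`-dimensional
module `V₁`: `f f^{(i)}v₁ = [i+1] f^{(i+1)}v₁` (zero for `i = l`), `k f^{(i)}v₁ =
q^{l−2i} f^{(i)}v₁`, and on the `q`-boson module `V₂`: `f f^{(j)}v₂ = [j+1] f^{(j+1)}v₂`. -/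
def deltaF (l : ℕ) (v : (ℕ × ℕ) →₀ K) : (ℕ × ℕ) →₀ K :=
  v.sum fun p c =>
    (if p.1 < l then Finsupp.single (p.1 + 1, p.2) (c * qint ((p.1 : ℤ) + 1)) else 0)
    + Finsupp.single (p.1, p.2 + 1) (c * (q ^ ((l : ℤ) - 2 * (p.1 : ℤ)) * qint ((p.2 : ℤ) + 1)))

/-- `A₀ ⊂ ℚ(q)`: the subring of rational functions regular at `q = 0`. -/
def inA0 (f : K) : Prop :=
  ∃ p r : Polynomial ℚ, r.coeff 0 ≠ 0 ∧
    f = algebraMap (Polynomial ℚ) K p / algebraMap (Polynomial ℚ) K r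

-- basic facts
lemma q_ne_zero : q ≠ 0 := by
  simpa [q] using RatFunc.algebraMap_ne_zero (Polynomial.X_ne_zero (R := ℚ))

lemma amap_ne_zero {r : Polynomial ℚ} (h : r.coeff 0 ≠ 0) :
    algebraMap (Polynomial ℚ) K r ≠ 0 := by
  apply RatFunc.algebraMap_ne_zero
  intro h0; exact h (by simp [h0])

lemma inA0_zero : inA0 0 := ⟨0, 1, by simp⟩
lemma inA0_one : inA0 1 := ⟨1, 1, by simp⟩

lemma inA0_add {f g : K} (hf : inA0 f) (hg : inA0 g) : inA0 (f + g) := by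
  obtain ⟨p1, r1, h1, rfl⟩ := hf
  obtain ⟨p2, r2, h2, rfl⟩ := hg
  refine ⟨p1 * r2 + p2 * r1, r1 * r2, by simpa [Polynomial.mul_coeff_zero] using mul_ne_zero h1 h2, ?_⟩
  have h1' := amap_ne_zero h1
  have h2' := amap_ne_zero h2
  field_simp
  simp only [map_add, map_mul]; ring

lemma inA0_mul {f g : K} (hf : inA0 f) (hg : inA0 g) : inA0 (f * g) := by
  obtain ⟨p1, r1, h1, rfl⟩ := hf
  obtain ⟨p2, r2, h2, rfl⟩ := hg
  refine ⟨p1 * p2, r1 * r2, by simpa [Polynomial.mul_coeff_zero] using mul_ne_zero h1 h2, ?_⟩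
  have h1' := amap_ne_zero h1
  have h2' := amap_ne_zero h2
  field_simp
  simp only [map_add, map_mul]; ring

lemma inA0_q : inA0 q := ⟨Polynomial.X, 1, by simp [q], by simp [q, RatFunc.algebraMap_X]⟩

lemma inA0_qpow (n : ℕ) : inA0 (q ^ n) := by
  induction n with
  | zero => simpa using inA0_one
  | succ k ih => rw [pow_succ]; exact inA0_mul ih inA0_q

-- rv: valuation ≥ n
def rv (n : ℤ) (f : K) : Prop := ∃ g : K, inA0 g ∧ f = q ^ n * g

lemma rv_zero (n : ℤ) : rv n 0 := ⟨0, inA0_zero, by simp⟩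

lemma rv_mono {m n : ℤ} (h : m ≤ n) {f : K} (hf : rv n f) : rv m f := by
  obtain ⟨g, hg, rfl⟩ := hf
  refine ⟨q ^ (n - m).toNat * g, inA0_mul (inA0_qpow _) hg, ?_⟩
  rw [← mul_assoc, ← zpow_natCast q, ← zpow_add₀ q_ne_zero]
  congr 2
  omega

lemma rv_add {n : ℤ} {f g : K} (hf : rv n f) (hg : rv n g) : rv n (f + g) := by
  obtain ⟨a, ha, rfl⟩ := hf
  obtain ⟨b, hb, rfl⟩ := hg
  exact ⟨a + b, inA0_add ha hb, by ring⟩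

lemma rv_of_inA0 {f : K} (hf : inA0 f) : rv 0 f := ⟨f, hf, by simp⟩

lemma rv_mul {m n : ℤ} {f g : K} (hf : rv m f) (hg : rv n g) : rv (m + n) (f * g) := by
  obtain ⟨a, ha, rfl⟩ := hf
  obtain ⟨b, hb, rfl⟩ := hg
  exact ⟨a * b, inA0_mul ha hb, by rw [zpow_add₀ q_ne_zero]; ring⟩

lemma inA0_of_rv {n : ℤ} (hn : 0 ≤ n) {f : K} (hf : rv n f) : inA0 f := by
  obtain ⟨g, hg, rfl⟩ := hf
  have : q ^ n = q ^ n.toNat := by rw [← zpow_natCast q]; congr 1; omega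
  rw [this]
  exact inA0_mul (inA0_qpow _) hg

lemma rv_qdiv {n : ℤ} (hn : 1 ≤ n) {f : K} (hf : rv n f) : inA0 (q⁻¹ * f) := by
  obtain ⟨g, hg, rfl⟩ := hf
  have : q⁻¹ * (q ^ n * g) = q ^ (n - 1) * g := by
    rw [zpow_sub₀ q_ne_zero]; field_simp
  rw [this]
  exact inA0_of_rv (by omega) (⟨g, hg, rfl⟩)

def Pp (k : ℕ) : Polynomial ℚ := ∑ i ∈ Finset.range k, Polynomial.X ^ (2 * i)
def U (k : ℕ) : K := algebraMap (Polynomial ℚ) K (Pp k)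

lemma Pp_coeff_zero {k : ℕ} (hk : 1 ≤ k) : (Pp k).coeff 0 = 1 := by
  obtain ⟨m, rfl⟩ : ∃ m, k = m + 1 := ⟨k - 1, by omega⟩
  rw [Pp, Polynomial.coeff_zero_eq_eval_zero]
  rw [Polynomial.eval_finset_sum]
  rw [Finset.sum_range_succ']
  simp [pow_succ, pow_mul]

lemma U_eq (k : ℕ) : U k = ∑ i ∈ Finset.range k, (q ^ 2) ^ i := by
  rw [U, Pp, map_sum]
  refine Finset.sum_congr rfl fun i _ => ?_
  rw [map_pow, RatFunc.algebraMap_X, ← pow_mul, q]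

lemma U_spec (k : ℕ) : U k * (q ^ 2 - 1) = q ^ (2 * k) - 1 := by
  rw [U_eq, geom_sum_mul, ← pow_mul]

lemma U_ne_zero {k : ℕ} (hk : 1 ≤ k) : U k ≠ 0 := by
  apply RatFunc.algebraMap_ne_zero
  intro h0
  have := Pp_coeff_zero hk
  rw [h0] at this
  simp at this

lemma inA0_U (k : ℕ) : inA0 (U k) := ⟨Pp k, 1, by simp, by simp [U]⟩

lemma inA0_Udiv (b : ℕ) {k : ℕ} (hk : 1 ≤ k) : inA0 (U b / U k) :=
  ⟨Pp b, Pp k, by rw [Pp_coeff_zero hk]; norm_num, rfl⟩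

lemma qsub_ne_zero : q - q⁻¹ ≠ 0 := by
  have h2 : (q : K) ^ 2 - 1 ≠ 0 := by
    have : (q : K) ^ 2 - 1 = algebraMap (Polynomial ℚ) K (Polynomial.X ^ 2 - 1) := by
      simp [q, RatFunc.algebraMap_X]
    rw [this]
    apply amap_ne_zero
    simp
  intro h
  apply h2
  have : q * (q - q⁻¹) = q ^ 2 - 1 := by
    rw [mul_sub, mul_inv_cancel₀ q_ne_zero]; ring
  rw [← this, h, mul_zero]

lemma qint_eq (k : ℕ) : qint (k : ℤ) = q ^ (1 - (k : ℤ)) * U k := by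
  rw [qint, div_eq_iff qsub_ne_zero]
  have hq : q * (q - q⁻¹) = q ^ 2 - 1 := by
    rw [mul_sub, mul_inv_cancel₀ q_ne_zero]; ring
  have h1 : q ^ (1 - (k : ℤ)) * U k * (q - q⁻¹) = q ^ (-(k : ℤ)) * (U k * (q ^ 2 - 1)) := by
    rw [sub_eq_add_neg, add_comm, zpow_add₀ q_ne_zero, zpow_one, ← hq]
    ring
  rw [h1, U_spec, mul_sub, mul_one, ← zpow_natCast q (2 * k), ← zpow_add₀ q_ne_zero]
  congr 2
  push_cast
  ring

lemma qint_ne_zero {k : ℕ} (hk : 1 ≤ k) : qint (k : ℤ) ≠ 0 := by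
  rw [qint_eq]
  exact mul_ne_zero (zpow_ne_zero _ q_ne_zero) (U_ne_zero hk)

lemma qfact_ne_zero (s : ℕ) : qfact s ≠ 0 := by
  induction s with
  | zero => simp [qfact]
  | succ k ih =>
    rw [qfact]
    exact mul_ne_zero ih (by exact_mod_cast qint_ne_zero (k := k + 1) (by omega))

lemma Etvec_apply (l t a b : ℕ) :
    Etvec l t (a, b) = if a + b = t then att l t a else 0 := by
  classical
  rw [Etvec, Finsupp.finset_sum_apply]
  have h1 : ∀ i ∈ Finset.range (t + 1),
      (Finsupp.single ((i : ℕ), t - i) (att l t i)) (a, b)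
      = if i = a then (if t - a = b then att l t a else 0) else 0 := by
    intro i _
    rw [Finsupp.single_apply]
    by_cases hia : i = a
    · subst hia
      by_cases htb : t - i = b
      · simp [htb]
      · have hn : ¬(((i, t - i) : ℕ × ℕ) = (i, b)) := by
          intro h
          exact htb (congrArg Prod.snd h)
        rw [if_neg hn, if_pos rfl, if_neg htb]
    · have hn : ¬(((i, t - i) : ℕ × ℕ) = (a, b)) := by
        intro h
        exact hia (congrArg Prod.fst h)
      rw [if_neg hn, if_neg hia]
  rw [Finset.sum_congr rfl h1, Finset.sum_ite_eq' (Finset.range (t + 1)) a]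
  by_cases hab : a + b = t
  · rw [if_pos (by simp; omega), if_pos (by omega), if_pos hab]
  · rw [if_neg hab]
    split_ifs with hmem hba
    · exfalso; rw [Finset.mem_range] at hmem; omega
    · rfl
    · rfl

lemma deltaF_apply (l : ℕ) (w : (ℕ × ℕ) →₀ K) (a b : ℕ) :
    deltaF l w (a, b)
      = (if 1 ≤ a ∧ a ≤ l then w (a - 1, b) * qint (a : ℤ) else 0)
        + (if 1 ≤ b then w (a, b - 1) * (q ^ ((l : ℤ) - 2 * (a : ℤ)) * qint (b : ℤ)) else 0) := by
  classical
  rw [deltaF, Finsupp.sum_apply, Finsupp.sum]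
  have h1 : ∀ p ∈ w.support,
      (((if p.1 < l then Finsupp.single (p.1 + 1, p.2) ((w p) * qint ((p.1 : ℤ) + 1)) else 0)
        + Finsupp.single (p.1, p.2 + 1)
            ((w p) * (q ^ ((l : ℤ) - 2 * (p.1 : ℤ)) * qint ((p.2 : ℤ) + 1)))) (a, b) : K)
      = (if p = (a - 1, b) then
          (if 1 ≤ a ∧ a ≤ l then (w p) * qint ((p.1 : ℤ) + 1) else 0) else 0)
        + (if p = (a, b - 1) then
          (if 1 ≤ b then (w p) * (q ^ ((l : ℤ) - 2 * (p.1 : ℤ)) * qint ((p.2 : ℤ) + 1)) else 0) else 0) := by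
    intro p _
    rw [Finsupp.add_apply]
    congr 1
    · by_cases hl : p.1 < l
      · rw [if_pos hl, Finsupp.single_apply]
        by_cases hp : ((p.1 + 1, p.2) : ℕ × ℕ) = (a, b)
        · have e1 : p.1 + 1 = a := congrArg Prod.fst hp
          have e2 : p.2 = b := congrArg Prod.snd hp
          have hp' : p = (a - 1, b) := Prod.ext_iff.mpr ⟨by omega, e2⟩
          rw [if_pos hp, if_pos hp', if_pos ⟨by omega, by omega⟩]
        · rw [if_neg hp]
          by_cases hp' : p = (a - 1, b)
          · have e1 : p.1 = a - 1 := congrArg Prod.fst hp'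
            have e2 : p.2 = b := congrArg Prod.snd hp'
            have hn : ¬(1 ≤ a ∧ a ≤ l) := by
              rintro ⟨ha1, ha2⟩
              exact hp (Prod.ext_iff.mpr ⟨by omega, e2⟩)
            rw [if_pos hp', if_neg hn]
          · rw [if_neg hp']
      · rw [if_neg hl, Finsupp.zero_apply]
        by_cases hp' : p = (a - 1, b)
        · have e1 : p.1 = a - 1 := congrArg Prod.fst hp'
          have hn : ¬(1 ≤ a ∧ a ≤ l) := by
            rintro ⟨ha1, ha2⟩
            exact hl (by omega)
          rw [if_pos hp', if_neg hn]
        · rw [if_neg hp']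
    · rw [Finsupp.single_apply]
      by_cases hp : ((p.1, p.2 + 1) : ℕ × ℕ) = (a, b)
      · have e1 : p.1 = a := congrArg Prod.fst hp
        have e2 : p.2 + 1 = b := congrArg Prod.snd hp
        have hp' : p = (a, b - 1) := Prod.ext_iff.mpr ⟨e1, by omega⟩
        rw [if_pos hp, if_pos hp', if_pos (by omega)]
      · rw [if_neg hp]
        by_cases hp' : p = (a, b - 1)
        · have e1 : p.1 = a := congrArg Prod.fst hp'
          have e2 : p.2 = b - 1 := congrArg Prod.snd hp'
          have hn : ¬(1 ≤ b) := by
            intro hb1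
            exact hp (Prod.ext_iff.mpr ⟨e1, by omega⟩)
          rw [if_pos hp', if_neg hn]
        · rw [if_neg hp']
  rw [Finset.sum_congr rfl h1, Finset.sum_add_distrib,
    Finset.sum_ite_eq' w.support (a - 1, b), Finset.sum_ite_eq' w.support (a, b - 1)]
  congr 1
  · by_cases hm : (a - 1, b) ∈ w.support
    · rw [if_pos hm]
      split_ifs with h
      · rw [show ((a : ℤ)) = (((a - 1 : ℕ) : ℤ) + 1) by omega]
      · rfl
    · rw [if_neg hm, Finsupp.notMem_support_iff.mp hm]
      split_ifs <;> simp
  · by_cases hm : (a, b - 1) ∈ w.support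
    · rw [if_pos hm]
      split_ifs with h
      · rw [show ((b : ℤ)) = (((b - 1 : ℕ) : ℤ) + 1) by omega]
      · rfl
    · rw [if_neg hm, Finsupp.notMem_support_iff.mp hm]
      split_ifs <;> simp

lemma qint_div_eq (a s : ℕ) :
    qint (a : ℤ) / qint ((s : ℤ) + 1) = q ^ ((s : ℤ) + 1 - a) * (U a / U (s + 1)) := by
  have h : ((s : ℤ) + 1) = (((s + 1 : ℕ)) : ℤ) := by push_cast; ring
  rw [h, qint_eq, qint_eq, mul_div_mul_comm, ← zpow_sub₀ q_ne_zero]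
  congr 2
  push_cast
  ring

lemma rv_mul_ratio1 {m : ℤ} {f : K} (hf : rv m f) (a s : ℕ) (ha : 1 ≤ a) :
    rv (m + (s : ℤ) + 1 - a) (f * (qint (a : ℤ) / qint ((s : ℤ) + 1))) := by
  obtain ⟨g, hg, rfl⟩ := hf
  refine ⟨g * (U a / U (s + 1)), inA0_mul hg (inA0_Udiv a (by omega)), ?_⟩
  rw [qint_div_eq, show m + (s : ℤ) + 1 - a = m + ((s : ℤ) + 1 - a) by ring,
    zpow_add₀ q_ne_zero]
  ring

lemma rv_mul_ratio2 {m : ℤ} {f : K} (hf : rv m f) (e : ℤ) (b s : ℕ) (hb : 1 ≤ b) :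
    rv (m + e + (s : ℤ) + 1 - b) (f * (q ^ e * qint (b : ℤ) / qint ((s : ℤ) + 1))) := by
  obtain ⟨g, hg, rfl⟩ := hf
  refine ⟨g * (U b / U (s + 1)), inA0_mul hg (inA0_Udiv b (by omega)), ?_⟩
  rw [mul_div_assoc, qint_div_eq, show m + e + (s : ℤ) + 1 - b = m + (e + ((s : ℤ) + 1 - b)) by ring,
    zpow_add₀ q_ne_zero, zpow_add₀ q_ne_zero]
  ring

def phi (l t s a : ℕ) : ℤ :=
  if s ≤ a then ((a : ℤ) - s) * ((l : ℤ) - s - t + 1) else ((s : ℤ) - a) * ((l : ℤ) - t - a)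

lemma phi_nonneg {l t s a : ℕ} (h : s + t ≤ l) : 0 ≤ phi l t s a := by
  rw [phi]
  split_ifs with hc
  · have h1 : (0:ℤ) ≤ (a : ℤ) - s := by push_cast; omega
    have h2 : (0:ℤ) ≤ (l : ℤ) - s - t + 1 := by push_cast; omega
    positivity
  · have h1 : (0:ℤ) ≤ (s : ℤ) - a := by push_cast; omega
    have h2 : (0:ℤ) ≤ (l : ℤ) - t - a := by push_cast; omega
    positivity

lemma phi_pos {l t s a : ℕ} (h : s + t ≤ l) (ha : a ≠ s) : 1 ≤ phi l t s a := by
  rw [phi]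
  split_ifs with hc
  · have h1 : (1:ℤ) ≤ (a : ℤ) - s := by push_cast; omega
    have h2 : (1:ℤ) ≤ (l : ℤ) - s - t + 1 := by push_cast; omega
    nlinarith
  · have h1 : (1:ℤ) ≤ (s : ℤ) - a := by push_cast; omega
    have h2 : (1:ℤ) ≤ (l : ℤ) - t - a := by push_cast; omega
    nlinarith

lemma ineq1 (l t s a : ℕ) (h : s + 1 + t ≤ l) (ha : 1 ≤ a) :
    phi l t (s + 1) a ≤ phi l t s (a - 1) + ((s : ℤ) + 1 - a) := by
  obtain ⟨a', rfl⟩ : ∃ a', a = a' + 1 := ⟨a - 1, by omega⟩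
  simp only [phi, Nat.add_sub_cancel]
  have hc : s + 1 + t ≤ l := h
  split_ifs with c1 c2
  · push_cast; nlinarith
  · exfalso; omega
  · exfalso; omega
  · push_cast; nlinarith

lemma ineq2 (l t s a : ℕ) (h : s + 1 + t ≤ l) :
    phi l t (s + 1) a ≤ phi l t s a + ((l : ℤ) - a - t) := by
  simp only [phi]
  split_ifs with c1 c2
  · push_cast; nlinarith
  · exfalso; omega
  · push_cast; nlinarith
  · push_cast; nlinarith

lemma rv_att (l t : ℕ) (hi_l : ∀ j, j < t → j < l) (i : ℕ) (hi : i ≤ t) :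
    rv ((i : ℤ) * ((l : ℤ) - t + 1)) (att l t i) := by
  induction i with
  | zero => simpa [att] using rv_of_inA0 inA0_one
  | succ n ih =>
    rw [att, Finset.prod_range_succ, ← att]
    have hfac : rv ((l : ℤ) - t + 1)
        (q ^ ((l : ℤ) - t + 1) / (q ^ (2 * ((l : ℤ) - n)) - 1)) := by
      have hnl : n < l := hi_l n (by omega)
      have hde : (q : K) ^ (2 * ((l : ℤ) - n)) - 1
          = algebraMap (Polynomial ℚ) K (Polynomial.X ^ (2 * (l - n)) - 1) := by
        rw [map_sub, map_one, map_pow, RatFunc.algebraMap_X, ← q]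
        congr 1
        rw [← zpow_natCast q (2 * (l - n))]
        congr 1
        push_cast
        omega
      refine ⟨(q ^ (2 * ((l : ℤ) - n)) - 1)⁻¹, ?_, by rw [div_eq_mul_inv]⟩
      refine ⟨1, Polynomial.X ^ (2 * (l - n)) - 1, ?_, ?_⟩
      · have hm : ¬ (0 = 2 * (l - n)) := by omega
        have hm' : ¬ (2 * (l - n) = 0) := by omega
        simp [Polynomial.coeff_X_pow, hm, hm']
      · rw [← hde, map_one]
        rw [inv_eq_one_div]
    have := rv_mul (ih (by omega)) hfac
    refine rv_mono (le_of_eq ?_) this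
    push_cast
    ring

def InvP (l t s : ℕ) (w : (ℕ × ℕ) →₀ K) : Prop :=
  (∀ a b : ℕ, a + b ≠ s + t → w (a, b) = 0) ∧
  (∀ a b : ℕ, rv (phi l t s a) (w (a, b))) ∧
  (∃ g : K, inA0 g ∧ w (s, t) = 1 + q * g)

lemma step_apply (l t s : ℕ) (a b : ℕ) :
    ((qfact (s + 1))⁻¹ • (deltaF l)^[s + 1] (Etvec l t)) (a, b)
      = (qint ((s : ℤ) + 1))⁻¹ *
        ((if 1 ≤ a ∧ a ≤ l then
            ((qfact s)⁻¹ • (deltaF l)^[s] (Etvec l t)) (a - 1, b) * qint (a : ℤ) else 0)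
          + (if 1 ≤ b then
            ((qfact s)⁻¹ • (deltaF l)^[s] (Etvec l t)) (a, b - 1)
              * (q ^ ((l : ℤ) - 2 * (a : ℤ)) * qint (b : ℤ)) else 0)) := by
  rw [Function.iterate_succ_apply', Finsupp.smul_apply, deltaF_apply]
  simp only [Finsupp.smul_apply, smul_eq_mul]
  have hq : qfact (s + 1) = qfact s * qint ((s : ℤ) + 1) := rfl
  have h1 : qfact s ≠ 0 := qfact_ne_zero s
  have h2 : qint ((s : ℤ) + 1) ≠ 0 := by
    have := qint_ne_zero (k := s + 1) (by omega)
    rwa [show (((s + 1 : ℕ)) : ℤ) = (s : ℤ) + 1 by push_cast; ring] at this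
  rw [hq, mul_inv]
  split_ifs <;> ring

lemma main_inv (l t : ℕ) (ht : t ≤ l) :
    ∀ s : ℕ, s + t ≤ l → InvP l t s ((qfact s)⁻¹ • (deltaF l)^[s] (Etvec l t)) := by
  intro s
  induction s with
  | zero =>
    intro hs
    have hw : ∀ a b : ℕ, ((qfact 0)⁻¹ • (deltaF l)^[0] (Etvec l t)) (a, b)
        = if a + b = t then att l t a else 0 := by
      intro a b
      rw [show qfact 0 = 1 from rfl, inv_one, one_smul, Function.iterate_zero_apply,
        Etvec_apply]
    refine ⟨?_, ?_, ?_⟩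
    · intro a b hab
      rw [hw, if_neg (by omega)]
    · intro a b
      rw [hw]
      by_cases hab : a + b = t
      · rw [if_pos hab]
        have h1 : rv ((a : ℤ) * ((l : ℤ) - t + 1)) (att l t a) :=
          rv_att l t (fun j hj => by omega) a (by omega)
        refine rv_mono (le_of_eq ?_) h1
        rw [phi, if_pos (by omega : 0 ≤ a)]
        push_cast
        ring
      · rw [if_neg hab]; exact rv_zero _
    · refine ⟨0, inA0_zero, ?_⟩
      rw [hw, if_pos (by omega)]
      simp [att]
  | succ s ih =>
    intro hs1
    have hs : s + t ≤ l := by omega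
    obtain ⟨ih1, ih2, ih3⟩ := ih hs
    set Ws := ((qfact s)⁻¹ • (deltaF l)^[s] (Etvec l t)) with hWs
    have h2 : qint ((s : ℤ) + 1) ≠ 0 := by
      have := qint_ne_zero (k := s + 1) (by omega)
      rwa [show (((s + 1 : ℕ)) : ℤ) = (s : ℤ) + 1 by push_cast; ring] at this
    have hsupp : ∀ a b : ℕ, a + b ≠ (s + 1) + t →
        ((qfact (s + 1))⁻¹ • (deltaF l)^[s + 1] (Etvec l t)) (a, b) = 0 := by
      intro a b hab
      rw [step_apply]
      have e1 : (if 1 ≤ a ∧ a ≤ l then Ws (a - 1, b) * qint (a : ℤ) else 0) = 0 := by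
        split_ifs with h
        · rw [ih1 (a - 1) b (by omega), zero_mul]
        · rfl
      have e2 : (if 1 ≤ b then Ws (a, b - 1)
          * (q ^ ((l : ℤ) - 2 * (a : ℤ)) * qint (b : ℤ)) else 0) = 0 := by
        split_ifs with h
        · rw [ih1 a (b - 1) (by omega), zero_mul]
        · rfl
      rw [← hWs, e1, e2, add_zero, mul_zero]
    refine ⟨hsupp, ?_, ?_⟩
    · intro a b
      by_cases hab : a + b = (s + 1) + t
      · rw [step_apply, ← hWs, mul_add]
        apply rv_add
        · split_ifs with h
          · have heq : (qint ((s : ℤ) + 1))⁻¹ * (Ws (a - 1, b) * qint (a : ℤ))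
                = Ws (a - 1, b) * (qint (a : ℤ) / qint ((s : ℤ) + 1)) := by
              rw [div_eq_mul_inv]; ring
            rw [heq]
            refine rv_mono ?_ (rv_mul_ratio1 (ih2 (a - 1) b) a s h.1)
            have := ineq1 l t s a (by omega) h.1
            omega
          · rw [mul_zero]; exact rv_zero _
        · split_ifs with h
          · have heq : (qint ((s : ℤ) + 1))⁻¹ * (Ws (a, b - 1)
                * (q ^ ((l : ℤ) - 2 * (a : ℤ)) * qint (b : ℤ)))
                = Ws (a, b - 1) * (q ^ ((l : ℤ) - 2 * (a : ℤ)) * qint (b : ℤ)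
                    / qint ((s : ℤ) + 1)) := by
              rw [div_eq_mul_inv]; ring
            rw [heq]
            refine rv_mono ?_ (rv_mul_ratio2 (ih2 a (b - 1)) ((l : ℤ) - 2 * a) b s h)
            have := ineq2 l t s a (by omega)
            have hb : (b : ℤ) = (s : ℤ) + 1 + t - a := by push_cast; omega
            omega
          · rw [mul_zero]; exact rv_zero _
      · rw [hsupp a b hab]; exact rv_zero _
    · obtain ⟨g, hg, hgs⟩ := ih3
      rw [step_apply, ← hWs]
      have hc1 : 1 ≤ s + 1 ∧ s + 1 ≤ l := ⟨by omega, by omega⟩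
      rw [if_pos hc1, Nat.add_sub_cancel]
      by_cases hb : 1 ≤ t
      · rw [if_pos hb]
        have hY : rv 1 (Ws (s + 1, t - 1)
            * (q ^ ((l : ℤ) - 2 * ((s + 1 : ℕ) : ℤ)) * qint (t : ℤ) / qint ((s : ℤ) + 1))) := by
          refine rv_mono ?_ (rv_mul_ratio2 (ih2 (s + 1) (t - 1))
            ((l : ℤ) - 2 * ((s + 1 : ℕ) : ℤ)) t s hb)
          have hphi : phi l t s (s + 1) = (l : ℤ) - s - t + 1 := by
            rw [phi, if_pos (by omega : s ≤ s + 1)]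
            push_cast
            ring
          rw [hphi]
          push_cast
          omega
        obtain ⟨g', hg', hY'⟩ := hY
        refine ⟨g + g', inA0_add hg hg', ?_⟩
        have expand : (qint ((s : ℤ) + 1))⁻¹ * (Ws (s, t) * qint (((s + 1 : ℕ)) : ℤ)
            + Ws (s + 1, t - 1) * (q ^ ((l : ℤ) - 2 * ((s + 1 : ℕ) : ℤ)) * qint (t : ℤ)))
            = Ws (s, t) + Ws (s + 1, t - 1)
              * (q ^ ((l : ℤ) - 2 * ((s + 1 : ℕ) : ℤ)) * qint (t : ℤ) / qint ((s : ℤ) + 1)) := by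
          rw [show (((s + 1 : ℕ)) : ℤ) = (s : ℤ) + 1 by push_cast; ring]
          field_simp
        rw [expand, hgs, hY', zpow_one]
        ring
      · rw [if_neg hb]
        refine ⟨g, hg, ?_⟩
        rw [add_zero, hgs]
        rw [show (((s + 1 : ℕ)) : ℤ) = (s : ℤ) + 1 by push_cast; ring]
        field_simp


/-- For `0 ≤ t ≤ l` and `0 ≤ s ≤ l − t`:
`Δ_B(f^{(s)}) E_t ≡ f^{(s)} v₁ ⊗ f^{(t)} v₂ (mod q L₁ ⊗ L₂)`, where `L₁ ⊗ L₂` is the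
`A₀`-lattice spanned by the vectors `f^{(i)}v₁ ⊗ f^{(j)}v₂` and
`Δ_B(f^{(s)}) = Δ_B(f)^s/[s]!`. -/
theorem deltaF_divided_power_Etvec (l t s : ℕ) (ht : t ≤ l) (hs : s + t ≤ l) :
    ∃ v : (ℕ × ℕ) →₀ K, (∀ p : ℕ × ℕ, inA0 (v p)) ∧
      (qfact s)⁻¹ • (deltaF l)^[s] (Etvec l t)
        = Finsupp.single (s, t) 1 + q • v := by
  obtain ⟨h1, h2, h3⟩ := main_inv l t ht s hs
  set Ws := (qfact s)⁻¹ • (deltaF l)^[s] (Etvec l t) with hWs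
  refine ⟨q⁻¹ • (Ws - Finsupp.single (s, t) 1), ?_, ?_⟩
  · rintro ⟨a, b⟩
    rw [Finsupp.smul_apply, Finsupp.sub_apply, smul_eq_mul, Finsupp.single_apply]
    by_cases hp : ((s, t) : ℕ × ℕ) = (a, b)
    · have ea : s = a := congrArg Prod.fst hp
      have eb : t = b := congrArg Prod.snd hp
      subst ea; subst eb
      rw [if_pos rfl]
      obtain ⟨g, hg, hgs⟩ := h3
      rw [hgs, add_sub_cancel_left, inv_mul_cancel_left₀ q_ne_zero]
      exact hg
    · rw [if_neg hp, sub_zero]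
      by_cases hab : a + b = s + t
      · have ha : a ≠ s := by
          intro h
          exact hp (Prod.ext_iff.mpr ⟨h.symm, by omega⟩)
        exact rv_qdiv (phi_pos hs ha) (h2 a b)
      · rw [h1 a b hab, mul_zero]
        exact inA0_zero
  · rw [smul_smul, mul_inv_cancel₀ q_ne_zero, one_smul, add_sub_cancel]


end
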